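/- Let c ⊂ ℙ² ⊂ ℙ⁴ be a smooth conic with plane ⟨c⟩ = {x₃ = x₄ = 0}, contained in the quartic surface S = Q₀ ∩ Q' where Q₀ = x₃ℓ₃ + x₄ℓ₄ + q(x₀,x₁,x₂) and Q' = x₃m₃ + x₄m₄ (so q is an equation of c in ⟨c⟩). Then the assignment x₃ ↦ m₄|_c, x₄ ↦ −m₃|_c, q ↦ (m₃ℓ₄ − m₄ℓ₃)|_c defines a well-defined global section θ ∈ Hom_{O_S}(I_{c/S}, O_c) = H⁰(N_{c/S}), and θ = 0 if and only if m₃ and m₄ both vanish identically on c (equivalently, m₃, m₄ ∈ ⟨x₃, x₄⟩, i.e., Q' has rank ≤ 2). -/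

import Mathlib

open MvPolynomial

set_option maxHeartbeats 1600000
set_option synthInstance.maxHeartbeats 400000

namespace Stmt15

/-- The homogeneous coordinate ring of `ℙ⁴`. -/
abbrev R := MvPolynomial (Fin 5) ℂ

/-- The linear form with coefficient vector `μ`. -/
noncomputable def lin (μ : Fin 5 → ℂ) : R := ∑ i, C (μ i) * X i

/-- The quadric `q(x₀,x₁,x₂)` with symmetric coefficient matrix `Mq`. -/
noncomputable def qconic (Mq : Matrix (Fin 3) (Fin 3) ℂ) : R :=
  ∑ i, ∑ j, C (Mq i j) * X (Fin.castLE (by norm_num) i) * X (Fin.castLE (by norm_num) j)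

/-! ### Auxiliary lemmas in the polynomial ring -/

/-- Substitution killing `x₃, x₄`. -/
noncomputable def sg3 : R →ₐ[ℂ] R := aeval fun i => if (i : ℕ) < 3 then X i else 0
/-- Substitution killing `x₄`. -/
noncomputable def sg4 : R →ₐ[ℂ] R := aeval fun i => if i = 4 then 0 else X i

lemma sg3_C (a : ℂ) : sg3 (C a) = C a := by simp [sg3]
lemma sg3_X (i : Fin 5) : sg3 (X i) = if (i : ℕ) < 3 then X i else 0 := by simp [sg3]
lemma sg4_X (i : Fin 5) : sg4 (X i) = if i = 4 then 0 else X i := by simp [sg4]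
lemma sg3_X3 : sg3 (X 3) = 0 := by rw [sg3_X, if_neg (by decide)]
lemma sg3_X4 : sg3 (X 4) = 0 := by rw [sg3_X, if_neg (by decide)]

lemma sub_sg3_mem (f : R) : f - sg3 f ∈ Ideal.span {(X 3 : R), X 4} := by
  induction f using MvPolynomial.induction_on with
  | C a => simp [sg3]
  | add f g hf hg =>
      have h := Ideal.add_mem _ hf hg
      have e : f + g - sg3 (f + g) = f - sg3 f + (g - sg3 g) := by rw [map_add]; ring
      rw [e]; exact h
  | mul_X f i hf =>
      rw [map_mul, sg3_X]
      by_cases h : (i : ℕ) < 3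
      · rw [if_pos h]
        have e : f * X i - sg3 f * X i = (f - sg3 f) * X i := by ring
        rw [e]; exact Ideal.mul_mem_right _ _ hf
      · rw [if_neg h, mul_zero, sub_zero]
        have hi : i = 3 ∨ i = 4 := by
          rcases i with ⟨v, hv⟩
          interval_cases v <;> simp_all
        rcases hi with rfl | rfl
        · exact Ideal.mul_mem_left _ _ (Ideal.subset_span (by simp))
        · exact Ideal.mul_mem_left _ _ (Ideal.subset_span (by simp))

lemma sub_sg4_mem (f : R) : f - sg4 f ∈ Ideal.span {(X 4 : R)} := by
  induction f using MvPolynomial.induction_on with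
  | C a => simp [sg4]
  | add f g hf hg =>
      have h := Ideal.add_mem _ hf hg
      have e : f + g - sg4 (f + g) = f - sg4 f + (g - sg4 g) := by rw [map_add]; ring
      rw [e]; exact h
  | mul_X f i hf =>
      rw [map_mul, sg4_X]
      by_cases h : i = 4
      · rw [if_pos h, mul_zero, sub_zero, h]
        exact Ideal.mul_mem_left _ _ (Ideal.subset_span (by simp))
      · rw [if_neg h]
        have e : f * X i - sg4 f * X i = (f - sg4 f) * X i := by ring
        rw [e]; exact Ideal.mul_mem_right _ _ hf

/-- `x₃, x₄` is a regular sequence: syzygies are Koszul. -/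
lemma regseq (a b : R) (h : a * X 3 + b * X 4 = 0) : ∃ d, a = d * X 4 ∧ b = -(d * X 3) := by
  have h4 : sg4 a * X 3 = 0 := by
    have := congrArg sg4 h
    simpa [map_add, map_mul, sg4_X] using this
  have ha : sg4 a = 0 := by
    rcases mul_eq_zero.mp h4 with h' | h'
    · exact h'
    · exact absurd h' (X_ne_zero _)
  have hmem : a ∈ Ideal.span {(X 4 : R)} := by
    have := sub_sg4_mem a; rwa [ha, sub_zero] at this
  obtain ⟨d, hd⟩ := Ideal.mem_span_singleton'.mp hmem
  refine ⟨d, hd.symm, ?_⟩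
  have h2 : X 4 * (d * X 3 + b) = 0 := by rw [← hd] at h; linear_combination h
  rcases mul_eq_zero.mp h2 with h' | h'
  · exact absurd h' (X_ne_zero _)
  · linear_combination h'

lemma sg3_q (Mq : Matrix (Fin 3) (Fin 3) ℂ) : sg3 (qconic Mq) = qconic Mq := by
  unfold qconic
  rw [map_sum]
  refine Finset.sum_congr rfl fun i _ => ?_
  rw [map_sum]
  refine Finset.sum_congr rfl fun j _ => ?_
  rw [map_mul, map_mul]
  simp [sg3, i.isLt, j.isLt]

lemma qhom (Mq : Matrix (Fin 3) (Fin 3) ℂ) : (qconic Mq).IsHomogeneous 2 := by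
  unfold qconic
  refine IsHomogeneous.sum _ _ _ fun i _ => IsHomogeneous.sum _ _ _ fun j _ => ?_
  have : (0 : ℕ) + 1 + 1 = 2 := rfl
  exact this ▸ ((isHomogeneous_C _ _).mul (isHomogeneous_X _ _)).mul (isHomogeneous_X _ _)

/-- Smoothness of the conic forces `q ≠ 0`. -/
lemma q_ne (Mq : Matrix (Fin 3) (Fin 3) ℂ) (hsymm : Mq.IsSymm) (hsmooth : Mq.det ≠ 0) :
    qconic Mq ≠ 0 := by
  intro h0
  have hB : ∀ w : Fin 3 → ℂ, ∑ i, ∑ j, Mq i j * w i * w j = 0 := by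
    intro w
    have := congrArg (eval (fun k : Fin 5 => if h : (k : ℕ) < 3 then w ⟨k, h⟩ else 0)) h0
    rw [map_zero] at this
    rw [← this]
    unfold qconic
    rw [map_sum]
    refine Finset.sum_congr rfl fun i _ => ?_
    rw [map_sum]
    refine Finset.sum_congr rfl fun j _ => ?_
    simp [i.isLt, j.isLt]
  have hM : Mq = 0 := by
    ext i j
    have h1 := hB (Pi.single i 1)
    have h2 := hB (Pi.single j 1)
    have h3 := hB (Pi.single i 1 + Pi.single j 1)
    simp only [Pi.single_apply, Pi.add_apply, Finset.sum_ite_eq', Finset.mem_univ, if_true,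
      mul_ite, mul_one, mul_zero, ite_mul, zero_mul, Finset.sum_ite_eq, Finset.sum_add_distrib,
      add_mul, mul_add] at h1 h2 h3
    by_cases hij : i = j
    · subst hij
      simp_all
    · have hs : Mq j i = Mq i j := by
        have := congrFun (congrFun hsymm i) j
        simpa [Matrix.IsSymm] using this
      simp_all
  rw [hM] at hsmooth; simp at hsmooth

lemma mem_span_triple {α : Type*} [CommRing α] {x y z f : α}
    (h : f ∈ Ideal.span {x, y, z}) : ∃ a b c, f = a * x + b * y + c * z := by
  obtain ⟨a, f', hf', hf⟩ := Ideal.mem_span_insert.mp h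
  obtain ⟨b, f'', hf'', hf2⟩ := Ideal.mem_span_insert.mp hf'
  obtain ⟨c, hc⟩ := Ideal.mem_span_singleton'.mp hf''
  exact ⟨a, b, c, by rw [hf, hf2, ← hc]; ring⟩

/-- The key syzygy computation: if `a x₃ + b x₄ + c q = 0`, then the image of the
corresponding combination of values lies in `(x₃, x₄, q)`. -/
lemma lemZ (Mq : Matrix (Fin 3) (Fin 3) ℂ) (hq : qconic Mq ≠ 0)
    (a b c m3 m4 w : R) (h : a * X 3 + b * X 4 + c * qconic Mq = 0) :
    a * m4 - b * m3 + c * w ∈ Ideal.span {X 3, X 4, qconic Mq} := by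
  have hsc : sg3 c = 0 := by
    have h3 : sg3 c * qconic Mq = 0 := by
      have := congrArg sg3 h
      rw [map_zero, map_add, map_add, map_mul, map_mul, map_mul, sg3_q, sg3_X3, sg3_X4] at this
      linear_combination this
    rcases mul_eq_zero.mp h3 with h' | h'
    · exact h'
    · exact absurd h' hq
  have hcmem : c ∈ Ideal.span {(X 3 : R), X 4} := by
    have := sub_sg3_mem c; rwa [hsc, sub_zero] at this
  obtain ⟨c3, c4, hc⟩ := Ideal.mem_span_pair.mp hcmem
  have h2 : (a + c3 * qconic Mq) * X 3 + (b + c4 * qconic Mq) * X 4 = 0 := by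
    linear_combination h + qconic Mq * hc
  obtain ⟨d, hd1, hd2⟩ := regseq _ _ h2
  have e : a * m4 - b * m3 + c * w =
      X 3 * (d * m3 + c3 * w) + X 4 * (d * m4 + c4 * w) +
        qconic Mq * (c4 * m3 - c3 * m4) := by
    linear_combination m4 * hd1 - m3 * hd2 - w * hc
  rw [e]
  have g1 : (X 3 : R) ∈ Ideal.span {X 3, X 4, qconic Mq} := Ideal.subset_span (by simp)
  have g2 : (X 4 : R) ∈ Ideal.span {X 3, X 4, qconic Mq} := Ideal.subset_span (by simp)
  have g3 : qconic Mq ∈ Ideal.span {X 3, X 4, qconic Mq} := Ideal.subset_span (by simp)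
  exact Ideal.add_mem _ (Ideal.add_mem _ (Ideal.mul_mem_right _ _ g1)
    (Ideal.mul_mem_right _ _ g2)) (Ideal.mul_mem_right _ _ g3)

/-- Well-definedness of θ modulo the ideal of the surface. -/
lemma key (Mq : Matrix (Fin 3) (Fin 3) ℂ) (hq : qconic Mq ≠ 0)
    (l3 l4 m3 m4 : R) (a b c a' b' c' : R)
    (h : a * X 3 + b * X 4 + c * qconic Mq - (a' * X 3 + b' * X 4 + c' * qconic Mq) ∈
      Ideal.span {X 3 * l3 + X 4 * l4 + qconic Mq, X 3 * m3 + X 4 * m4}) :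
    a * m4 - b * m3 + c * (m3 * l4 - m4 * l3) -
      (a' * m4 - b' * m3 + c' * (m3 * l4 - m4 * l3)) ∈
      Ideal.span {X 3, X 4, qconic Mq} := by
  obtain ⟨u, v, huv⟩ := Ideal.mem_span_pair.mp h
  have h0 : (a - a' - u * l3 - v * m3) * X 3 + (b - b' - u * l4 - v * m4) * X 4 +
      (c - c' - u) * qconic Mq = 0 := by linear_combination -huv
  have := lemZ Mq hq _ _ _ m3 m4 (m3 * l4 - m4 * l3) h0
  convert this using 1
  ring

lemma sg3_lin (t : Fin 5 → ℂ) :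
    sg3 (lin t) = C (t 0) * X 0 + C (t 1) * X 1 + C (t 2) * X 2 := by
  unfold lin
  rw [Fin.sum_univ_five]
  simp only [map_add, map_mul, sg3_X, sg3_C]
  rw [if_pos (by decide), if_pos (by decide), if_pos (by decide), if_neg (by decide),
    if_neg (by decide)]
  ring

lemma coeff_mul_q (Mq : Matrix (Fin 3) (Fin 3) ℂ) (p : R) (i : Fin 5) :
    coeff (Finsupp.single i 1) (p * qconic Mq) = 0 := by
  rw [coeff_mul]
  refine Finset.sum_eq_zero fun uv huv => ?_
  rw [Finset.HasAntidiagonal.mem_antidiagonal] at huv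
  have hdeg : (uv.2).degree ≤ 1 := by
    have : (uv.1).degree + (uv.2).degree = (Finsupp.single i 1).degree := by
      rw [← huv]
      simp [Finsupp.degree_eq_weight_one, map_add]
    have hs : (Finsupp.single i 1).degree = 1 := by
      rw [Finsupp.degree_single]
    omega
  rw [(qhom Mq).coeff_eq_zero (by omega), mul_zero]

/-- A linear form in `(x₃, x₄, q)` has no `x₀, x₁, x₂` part. -/
lemma lin_coeffs_vanish (Mq : Matrix (Fin 3) (Fin 3) ℂ) (t : Fin 5 → ℂ)
    (ht : lin t ∈ Ideal.span {X 3, X 4, qconic Mq}) :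
    ∀ i : Fin 5, (i : ℕ) < 3 → t i = 0 := by
  obtain ⟨a, b, c, habc⟩ := mem_span_triple ht
  have hσ : sg3 (lin t) = sg3 c * qconic Mq := by
    rw [habc, map_add, map_add, map_mul, map_mul, map_mul, sg3_q, sg3_X3, sg3_X4]
    ring
  rw [sg3_lin] at hσ
  intro i hi
  have hcoeff := congrArg (coeff (Finsupp.single i 1)) hσ
  rw [coeff_mul_q] at hcoeff
  clear hσ habc ht
  fin_cases i <;> first
    | exact absurd hi (by decide)
    | simpa [coeff_C_mul, coeff_X', Finsupp.single_eq_single_iff] using hcoeff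

lemma lin_decomp (t : Fin 5 → ℂ) (h : ∀ i : Fin 5, (i : ℕ) < 3 → t i = 0) :
    lin t = C (t 3) * X 3 + C (t 4) * X 4 := by
  unfold lin
  rw [Fin.sum_univ_five, h 0 (by decide), h 1 (by decide), h 2 (by decide)]
  simp

/-! ### The quotient rings -/

section Quot

variable (lam3 lam4 mu3 mu4 : Fin 5 → ℂ) (Mq : Matrix (Fin 3) (Fin 3) ℂ)

/-- The ideal `(x₃, x₄, q)` of the conic in `ℙ⁴`. -/
noncomputable abbrev J0I : Ideal R := Ideal.span {X 3, X 4, qconic Mq}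

/-- The ideal of the surface `S`. -/
noncomputable abbrev ISI : Ideal R :=
  Ideal.span {X 3 * lin lam3 + X 4 * lin lam4 + qconic Mq, X 3 * lin mu3 + X 4 * lin mu4}

/-- The coordinate ring of `S`. -/
noncomputable abbrev AI := R ⧸ ISI lam3 lam4 mu3 mu4 Mq

noncomputable abbrev mkI : R →+* AI lam3 lam4 mu3 mu4 Mq := Ideal.Quotient.mk _

/-- The ideal of the conic in `S`. -/
noncomputable abbrev JcI : Ideal (AI lam3 lam4 mu3 mu4 Mq) :=
  Ideal.span {mkI lam3 lam4 mu3 mu4 Mq (X 3), mkI lam3 lam4 mu3 mu4 Mq (X 4),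
    mkI lam3 lam4 mu3 mu4 Mq (qconic Mq)}

noncomputable abbrev mkcI :
    AI lam3 lam4 mu3 mu4 Mq →+* AI lam3 lam4 mu3 mu4 Mq ⧸ JcI lam3 lam4 mu3 mu4 Mq :=
  Ideal.Quotient.mk _

lemma IS_le_J0 : ISI lam3 lam4 mu3 mu4 Mq ≤ J0I Mq := by
  rw [Ideal.span_le]
  rintro x hx
  simp only [Set.mem_insert_iff, Set.mem_singleton_iff] at hx
  have g1 : (X 3 : R) ∈ J0I Mq := Ideal.subset_span (by simp)
  have g2 : (X 4 : R) ∈ J0I Mq := Ideal.subset_span (by simp)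
  have g3 : qconic Mq ∈ J0I Mq := Ideal.subset_span (by simp)
  rcases hx with rfl | rfl
  · exact Ideal.add_mem _ (Ideal.add_mem _ (Ideal.mul_mem_right _ _ g1)
      (Ideal.mul_mem_right _ _ g2)) g3
  · exact Ideal.add_mem _ (Ideal.mul_mem_right _ _ g1) (Ideal.mul_mem_right _ _ g2)

lemma mem_Jc_iff (f : R) :
    mkI lam3 lam4 mu3 mu4 Mq f ∈ JcI lam3 lam4 mu3 mu4 Mq ↔ f ∈ J0I Mq := by
  have hmap : JcI lam3 lam4 mu3 mu4 Mq = Ideal.map (mkI lam3 lam4 mu3 mu4 Mq) (J0I Mq) := by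
    rw [Ideal.map_span]
    congr 1
    simp [Set.image_insert_eq]
  rw [hmap]
  constructor
  · intro h
    have h2 : f ∈ Ideal.comap (mkI lam3 lam4 mu3 mu4 Mq)
        (Ideal.map (mkI lam3 lam4 mu3 mu4 Mq) (J0I Mq)) := h
    rw [Ideal.comap_map_of_surjective _ Ideal.Quotient.mk_surjective] at h2
    have hker : Ideal.comap (mkI lam3 lam4 mu3 mu4 Mq) ⊥ = ISI lam3 lam4 mu3 mu4 Mq :=
      Ideal.mk_ker
    rw [hker, sup_eq_left.mpr (IS_le_J0 lam3 lam4 mu3 mu4 Mq)] at h2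
    exact h2
  · intro h
    exact Ideal.mem_map_of_mem _ h

lemma smul_mkquot {α : Type*} [CommRing α] (I : Ideal α) (r z : α) :
    r • Ideal.Quotient.mk I z = Ideal.Quotient.mk I (r * z) := by
  rfl

lemma hval (hsymm : Mq.IsSymm) (hsmooth : Mq.det ≠ 0) (a b c a' b' c' : R)
    (h : mkI lam3 lam4 mu3 mu4 Mq (a * X 3 + b * X 4 + c * qconic Mq) =
         mkI lam3 lam4 mu3 mu4 Mq (a' * X 3 + b' * X 4 + c' * qconic Mq)) :
    mkcI lam3 lam4 mu3 mu4 Mq (mkI lam3 lam4 mu3 mu4 Mq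
        (a * lin mu4 - b * lin mu3 + c * (lin mu3 * lin lam4 - lin mu4 * lin lam3))) =
    mkcI lam3 lam4 mu3 mu4 Mq (mkI lam3 lam4 mu3 mu4 Mq
        (a' * lin mu4 - b' * lin mu3 + c' * (lin mu3 * lin lam4 - lin mu4 * lin lam3))) := by
  have hsub := (Ideal.Quotient.mk_eq_mk_iff_sub_mem _ _).mp h
  have hk := key Mq (q_ne Mq hsymm hsmooth) (lin lam3) (lin lam4) (lin mu3) (lin mu4)
    a b c a' b' c' hsub
  rw [Ideal.Quotient.mk_eq_mk_iff_sub_mem, ← map_sub]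
  exact (mem_Jc_iff lam3 lam4 mu3 mu4 Mq _).mpr hk

lemma hrep (x : JcI lam3 lam4 mu3 mu4 Mq) :
    ∃ a b c : R, (x : AI lam3 lam4 mu3 mu4 Mq) =
      mkI lam3 lam4 mu3 mu4 Mq (a * X 3 + b * X 4 + c * qconic Mq) := by
  obtain ⟨x, hx⟩ := x
  refine Submodule.span_induction (p := fun y _ => ∃ a b c : R,
    y = mkI lam3 lam4 mu3 mu4 Mq (a * X 3 + b * X 4 + c * qconic Mq)) ?_ ?_ ?_ ?_ hx
  · rintro y hy
    simp only [Set.mem_insert_iff, Set.mem_singleton_iff] at hy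
    rcases hy with rfl | rfl | rfl
    · exact ⟨1, 0, 0, by rw [show (1 : R) * X 3 + 0 * X 4 + 0 * qconic Mq = X 3 by ring]⟩
    · exact ⟨0, 1, 0, by rw [show (0 : R) * X 3 + 1 * X 4 + 0 * qconic Mq = X 4 by ring]⟩
    · exact ⟨0, 0, 1, by rw [show (0 : R) * X 3 + 0 * X 4 + 1 * qconic Mq = qconic Mq by ring]⟩
  · exact ⟨0, 0, 0, by rw [show (0 : R) * X 3 + 0 * X 4 + 0 * qconic Mq = 0 by ring, map_zero]⟩
  · rintro y z _ _ ⟨a, b, c, hy'⟩ ⟨a', b', c', hz'⟩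
    refine ⟨a + a', b + b', c + c', ?_⟩
    rw [hy', hz', ← map_add]
    congr 1
    ring
  · rintro r y _ ⟨a, b, c, hy'⟩
    obtain ⟨u, rfl⟩ := Ideal.Quotient.mk_surjective r
    refine ⟨u * a, u * b, u * c, ?_⟩
    rw [smul_eq_mul, hy', ← map_mul]
    congr 1
    ring

/-- Existence of the section θ. -/
theorem part1 (hsymm : Mq.IsSymm) (hsmooth : Mq.det ≠ 0) :
    ∃ θ : JcI lam3 lam4 mu3 mu4 Mq →ₗ[AI lam3 lam4 mu3 mu4 Mq]
        AI lam3 lam4 mu3 mu4 Mq ⧸ JcI lam3 lam4 mu3 mu4 Mq,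
      θ ⟨mkI lam3 lam4 mu3 mu4 Mq (X 3), Ideal.subset_span (Set.mem_insert _ _)⟩ =
          mkcI lam3 lam4 mu3 mu4 Mq (mkI lam3 lam4 mu3 mu4 Mq (lin mu4)) ∧
      θ ⟨mkI lam3 lam4 mu3 mu4 Mq (X 4), Ideal.subset_span
          (Set.mem_insert_of_mem _ (Set.mem_insert _ _))⟩ =
          mkcI lam3 lam4 mu3 mu4 Mq (mkI lam3 lam4 mu3 mu4 Mq (-lin mu3)) ∧
      θ ⟨mkI lam3 lam4 mu3 mu4 Mq (qconic Mq), Ideal.subset_span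
          (Set.mem_insert_of_mem _ (Set.mem_insert_of_mem _ rfl))⟩ =
          mkcI lam3 lam4 mu3 mu4 Mq (mkI lam3 lam4 mu3 mu4 Mq
            (lin mu3 * lin lam4 - lin mu4 * lin lam3)) := by
  classical
  choose af bf cf hf using hrep lam3 lam4 mu3 mu4 Mq
  have hval2 : ∀ (x : JcI lam3 lam4 mu3 mu4 Mq) (a b c : R),
      (x : AI lam3 lam4 mu3 mu4 Mq) =
        mkI lam3 lam4 mu3 mu4 Mq (a * X 3 + b * X 4 + c * qconic Mq) →
      mkcI lam3 lam4 mu3 mu4 Mq (mkI lam3 lam4 mu3 mu4 Mq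
          (af x * lin mu4 - bf x * lin mu3 +
            cf x * (lin mu3 * lin lam4 - lin mu4 * lin lam3))) =
      mkcI lam3 lam4 mu3 mu4 Mq (mkI lam3 lam4 mu3 mu4 Mq
          (a * lin mu4 - b * lin mu3 + c * (lin mu3 * lin lam4 - lin mu4 * lin lam3))) :=
    fun x a b c hx => hval lam3 lam4 mu3 mu4 Mq hsymm hsmooth _ _ _ _ _ _
      ((hf x).symm.trans hx)
  refine ⟨{ toFun := fun x => mkcI lam3 lam4 mu3 mu4 Mq (mkI lam3 lam4 mu3 mu4 Mq
              (af x * lin mu4 - bf x * lin mu3 +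
                cf x * (lin mu3 * lin lam4 - lin mu4 * lin lam3))),
            map_add' := ?_, map_smul' := ?_ }, ?_, ?_, ?_⟩
  · intro x y
    have hxy : ((x + y : JcI lam3 lam4 mu3 mu4 Mq) : AI lam3 lam4 mu3 mu4 Mq) =
        mkI lam3 lam4 mu3 mu4 Mq
          ((af x + af y) * X 3 + (bf x + bf y) * X 4 + (cf x + cf y) * qconic Mq) := by
      rw [Submodule.coe_add, hf x, hf y, ← map_add]
      congr 1
      ring
    rw [hval2 (x + y) _ _ _ hxy, ← map_add, ← map_add]
    congr 1
    ring
  · intro r x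
    obtain ⟨u, hu⟩ := Ideal.Quotient.mk_surjective r
    have hrx : ((r • x : JcI lam3 lam4 mu3 mu4 Mq) : AI lam3 lam4 mu3 mu4 Mq) =
        mkI lam3 lam4 mu3 mu4 Mq
          ((u * af x) * X 3 + (u * bf x) * X 4 + (u * cf x) * qconic Mq) := by
      rw [SetLike.val_smul, ← hu, smul_eq_mul, hf x, ← map_mul]
      congr 1
      ring
    dsimp only [RingHom.id_apply]
    rw [hval2 (r • x) _ _ _ hrx, ← hu, smul_mkquot, ← map_mul]
    congr 1
    ring
  · simp only [LinearMap.coe_mk, AddHom.coe_mk]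
    rw [hval2 ⟨mkI lam3 lam4 mu3 mu4 Mq (X 3), Ideal.subset_span (Set.mem_insert _ _)⟩ 1 0 0 (by
      rw [show (1 : R) * X 3 + 0 * X 4 + 0 * qconic Mq = X 3 by ring]),
      show (1 : R) * lin mu4 - 0 * lin mu3 +
        0 * (lin mu3 * lin lam4 - lin mu4 * lin lam3) = lin mu4 by ring]
  · simp only [LinearMap.coe_mk, AddHom.coe_mk]
    rw [hval2 ⟨mkI lam3 lam4 mu3 mu4 Mq (X 4), Ideal.subset_span
        (Set.mem_insert_of_mem _ (Set.mem_insert _ _))⟩ 0 1 0 (by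
      rw [show (0 : R) * X 3 + 1 * X 4 + 0 * qconic Mq = X 4 by ring]),
      show (0 : R) * lin mu4 - 1 * lin mu3 +
        0 * (lin mu3 * lin lam4 - lin mu4 * lin lam3) = -lin mu3 by ring]
  · simp only [LinearMap.coe_mk, AddHom.coe_mk]
    rw [hval2 ⟨mkI lam3 lam4 mu3 mu4 Mq (qconic Mq), Ideal.subset_span
        (Set.mem_insert_of_mem _ (Set.mem_insert_of_mem _ rfl))⟩ 0 0 1 (by
      rw [show (0 : R) * X 3 + 0 * X 4 + 1 * qconic Mq = qconic Mq by ring]),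
      show (0 : R) * lin mu4 - 0 * lin mu3 +
        1 * (lin mu3 * lin lam4 - lin mu4 * lin lam3) =
        lin mu3 * lin lam4 - lin mu4 * lin lam3 by ring]

/-- Characterization of θ = 0. -/
theorem part2 (hsymm : Mq.IsSymm) (hsmooth : Mq.det ≠ 0)
    (θ : JcI lam3 lam4 mu3 mu4 Mq →ₗ[AI lam3 lam4 mu3 mu4 Mq]
        AI lam3 lam4 mu3 mu4 Mq ⧸ JcI lam3 lam4 mu3 mu4 Mq)
    (h1 : θ ⟨mkI lam3 lam4 mu3 mu4 Mq (X 3), Ideal.subset_span (Set.mem_insert _ _)⟩ =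
          mkcI lam3 lam4 mu3 mu4 Mq (mkI lam3 lam4 mu3 mu4 Mq (lin mu4)))
    (h2 : θ ⟨mkI lam3 lam4 mu3 mu4 Mq (X 4), Ideal.subset_span
          (Set.mem_insert_of_mem _ (Set.mem_insert _ _))⟩ =
          mkcI lam3 lam4 mu3 mu4 Mq (mkI lam3 lam4 mu3 mu4 Mq (-lin mu3)))
    (h3 : θ ⟨mkI lam3 lam4 mu3 mu4 Mq (qconic Mq), Ideal.subset_span
          (Set.mem_insert_of_mem _ (Set.mem_insert_of_mem _ rfl))⟩ =
          mkcI lam3 lam4 mu3 mu4 Mq (mkI lam3 lam4 mu3 mu4 Mq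
            (lin mu3 * lin lam4 - lin mu4 * lin lam3))) :
    θ = 0 ↔ (∀ i : Fin 5, (i : ℕ) < 3 → mu3 i = 0) ∧
      (∀ i : Fin 5, (i : ℕ) < 3 → mu4 i = 0) := by
  constructor
  · intro h0
    rw [h0] at h1 h2
    simp only [LinearMap.zero_apply] at h1 h2
    have hm4 : lin mu4 ∈ J0I Mq :=
      (mem_Jc_iff lam3 lam4 mu3 mu4 Mq _).mp (Ideal.Quotient.eq_zero_iff_mem.mp h1.symm)
    have hm3' : -lin mu3 ∈ J0I Mq :=
      (mem_Jc_iff lam3 lam4 mu3 mu4 Mq _).mp (Ideal.Quotient.eq_zero_iff_mem.mp h2.symm)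
    have hm3 : lin mu3 ∈ J0I Mq := by
      have := neg_mem hm3'
      rwa [neg_neg] at this
    exact ⟨lin_coeffs_vanish Mq mu3 hm3, lin_coeffs_vanish Mq mu4 hm4⟩
  · rintro ⟨hmu3, hmu4⟩
    have g1 : (X 3 : R) ∈ J0I Mq := Ideal.subset_span (by simp)
    have g2 : (X 4 : R) ∈ J0I Mq := Ideal.subset_span (by simp)
    have hm3 : lin mu3 ∈ J0I Mq := by
      rw [lin_decomp mu3 hmu3]
      exact add_mem (Ideal.mul_mem_left _ _ g1) (Ideal.mul_mem_left _ _ g2)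
    have hm4 : lin mu4 ∈ J0I Mq := by
      rw [lin_decomp mu4 hmu4]
      exact add_mem (Ideal.mul_mem_left _ _ g1) (Ideal.mul_mem_left _ _ g2)
    have hw : lin mu3 * lin lam4 - lin mu4 * lin lam3 ∈ J0I Mq :=
      sub_mem (Ideal.mul_mem_right _ _ hm3) (Ideal.mul_mem_right _ _ hm4)
    have v1 : mkcI lam3 lam4 mu3 mu4 Mq (mkI lam3 lam4 mu3 mu4 Mq (lin mu4)) = 0 :=
      Ideal.Quotient.eq_zero_iff_mem.mpr ((mem_Jc_iff lam3 lam4 mu3 mu4 Mq _).mpr hm4)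
    have v2 : mkcI lam3 lam4 mu3 mu4 Mq (mkI lam3 lam4 mu3 mu4 Mq (-lin mu3)) = 0 := by
      rw [map_neg, map_neg, neg_eq_zero]
      exact Ideal.Quotient.eq_zero_iff_mem.mpr ((mem_Jc_iff lam3 lam4 mu3 mu4 Mq _).mpr hm3)
    have v3 : mkcI lam3 lam4 mu3 mu4 Mq (mkI lam3 lam4 mu3 mu4 Mq
        (lin mu3 * lin lam4 - lin mu4 * lin lam3)) = 0 :=
      Ideal.Quotient.eq_zero_iff_mem.mpr ((mem_Jc_iff lam3 lam4 mu3 mu4 Mq _).mpr hw)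
    apply LinearMap.ext
    rintro ⟨x, hx⟩
    simp only [LinearMap.zero_apply]
    refine Submodule.span_induction (p := fun y hy => θ ⟨y, hy⟩ = 0) ?_ ?_ ?_ ?_ hx
    · rintro y hy
      simp only [Set.mem_insert_iff, Set.mem_singleton_iff] at hy
      rcases hy with rfl | rfl | rfl
      · exact h1.trans v1
      · exact h2.trans v2
      · exact h3.trans v3
    · exact map_zero θ
    · intro y z hy hz ihy ihz
      have e : (⟨y + z, add_mem hy hz⟩ : JcI lam3 lam4 mu3 mu4 Mq) = ⟨y, hy⟩ + ⟨z, hz⟩ := rfl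
      rw [e, map_add, ihy, ihz, add_zero]
    · intro r y hy ihy
      have e : (⟨r • y, Submodule.smul_mem _ r hy⟩ : JcI lam3 lam4 mu3 mu4 Mq) =
          r • (⟨y, hy⟩ : JcI lam3 lam4 mu3 mu4 Mq) := rfl
      rw [e, map_smul, ihy, smul_zero]

end Quot

/-- let `c ⊂ ℙ² ⊂ ℙ⁴` be a smooth conic with plane `⟨c⟩ = {x₃ = x₄ = 0}`
and equation `q = q(x₀,x₁,x₂)` (given by a nondegenerate symmetric matrix `Mq`), contained
in the quartic surface `S = Q₀ ∩ Q'` where `Q₀ = x₃ℓ₃ + x₄ℓ₄ + q` and `Q' = x₃m₃ + x₄m₄`.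
Then the assignment `x₃ ↦ m₄|_c`, `x₄ ↦ −m₃|_c`, `q ↦ (m₃ℓ₄ − m₄ℓ₃)|_c` defines a
well-defined global section `θ ∈ Hom_{O_S}(I_{c/S}, O_c) = H⁰(N_{c/S})` (an
`O_S`-module homomorphism from the ideal of `c` in `S` to `O_c`), and `θ = 0` iff `m₃`
and `m₄` both vanish identically on `c`, i.e. `m₃, m₄ ∈ ⟨x₃, x₄⟩`. -/
theorem normal_section_of_conic
    (lam3 lam4 mu3 mu4 : Fin 5 → ℂ)
    (Mq : Matrix (Fin 3) (Fin 3) ℂ) (hsymm : Mq.IsSymm) (hsmooth : Mq.det ≠ 0) :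
    letI Q0 : R := X 3 * lin lam3 + X 4 * lin lam4 + qconic Mq
    letI Q' : R := X 3 * lin mu3 + X 4 * lin mu4
    letI IS : Ideal R := Ideal.span {Q0, Q'}
    letI A := R ⧸ IS
    letI mk : R →+* A := Ideal.Quotient.mk IS
    letI Jc : Ideal A := Ideal.span {mk (X 3), mk (X 4), mk (qconic Mq)}
    letI mkc : A →+* A ⧸ Jc := Ideal.Quotient.mk Jc
    letI isθ : (Jc →ₗ[A] A ⧸ Jc) → Prop := fun θ =>
      θ ⟨mk (X 3), Ideal.subset_span (Set.mem_insert _ _)⟩ = mkc (mk (lin mu4)) ∧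
      θ ⟨mk (X 4), Ideal.subset_span
          (Set.mem_insert_of_mem _ (Set.mem_insert _ _))⟩ = mkc (mk (-lin mu3)) ∧
      θ ⟨mk (qconic Mq), Ideal.subset_span
          (Set.mem_insert_of_mem _ (Set.mem_insert_of_mem _ rfl))⟩ =
        mkc (mk (lin mu3 * lin lam4 - lin mu4 * lin lam3))
    (∃ θ : Jc →ₗ[A] A ⧸ Jc, isθ θ) ∧
    ∀ θ : Jc →ₗ[A] A ⧸ Jc, isθ θ →
      (θ = 0 ↔ (∀ i : Fin 5, (i : ℕ) < 3 → mu3 i = 0) ∧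
        (∀ i : Fin 5, (i : ℕ) < 3 → mu4 i = 0)) := by
  exact ⟨part1 lam3 lam4 mu3 mu4 Mq hsymm hsmooth,
    fun θ hθ => part2 lam3 lam4 mu3 mu4 Mq hsymm hsmooth θ hθ.1 hθ.2.1 hθ.2.2⟩

end Stmt15
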